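/- Let A = (n, Σ, M, α, η) be an ℝ-weighted automaton. Then L_A(w) = 0 for all words w ∈ Σ* if and only if there exists a linear subspace 𝒱 ⊆ ℝ^n (of row vectors) such that α ∈ 𝒱, every v ∈ 𝒱 satisfies v η = 0, and v M(a) ∈ 𝒱 for every v ∈ 𝒱 and every a ∈ Σ. -/

import Mathlib

open Matrix

noncomputable section

/-- The matrix `M(w)` of a word: `M(ε) = I`, `M(a₁⋯a_k) = M(a₁)⋯M(a_k)`. -/
def wordProd {S : Type*} {Γ : Type*} [Fintype S] [DecidableEq S]
    (M : Γ → Matrix S S ℝ) (w : List Γ) : Matrix S S ℝ :=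
  (w.map M).prod

/-- The language of the weighted automaton `(M, α, η)`: `L(w) = α M(w) η`. -/
def WAlang {S : Type*} {Γ : Type*} [Fintype S] [DecidableEq S]
    (M : Γ → Matrix S S ℝ) (α η : S → ℝ) (w : List Γ) : ℝ :=
  α ⬝ᵥ (wordProd M w).mulVec η

/-- Auxiliary: dot product with `η` as a linear map. -/
def dotLin {n : ℕ} (η : Fin n → ℝ) : (Fin n → ℝ) →ₗ[ℝ] ℝ where
  toFun v := v ⬝ᵥ η
  map_add' x y := add_dotProduct x y η
  map_smul' c x := smul_dotProduct c x η

/-- a WA is zero iff there is a subspace `𝒱` of row vectors with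
`α ∈ 𝒱`, `v η = 0` for all `v ∈ 𝒱`, and `v M(a) ∈ 𝒱` for all `v ∈ 𝒱`, `a ∈ Σ`. -/
theorem WA_zero_iff_invariant_subspace {Γ : Type*} {n : ℕ}
    (M : Γ → Matrix (Fin n) (Fin n) ℝ) (α η : Fin n → ℝ) :
    (∀ w : List Γ, WAlang M α η w = 0) ↔
    (∃ V : Submodule ℝ (Fin n → ℝ),
      α ∈ V ∧
      (∀ v ∈ V, v ⬝ᵥ η = 0) ∧
      (∀ v ∈ V, ∀ a, Matrix.vecMul v (M a) ∈ V)) := by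
  have hWA : ∀ w, WAlang M α η w = Matrix.vecMul α (wordProd M w) ⬝ᵥ η := by
    intro w
    simp [WAlang, Matrix.dotProduct_mulVec]
  constructor
  · intro hzero
    refine ⟨Submodule.span ℝ (Set.range fun w => Matrix.vecMul α (wordProd M w)),
      ?_, ?_, ?_⟩
    · exact Submodule.subset_span ⟨[], by simp [wordProd, Matrix.vecMul_one]⟩
    · intro v hv
      have : Submodule.span ℝ (Set.range fun w => Matrix.vecMul α (wordProd M w)) ≤
          LinearMap.ker (dotLin η) := by
        rw [Submodule.span_le]
        rintro _ ⟨w, rfl⟩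
        simpa [LinearMap.mem_ker, dotLin] using (hWA w ▸ hzero w)
      simpa [dotLin] using this hv
    · intro v hv a
      have : Submodule.span ℝ (Set.range fun w => Matrix.vecMul α (wordProd M w)) ≤
          (Submodule.span ℝ (Set.range fun w => Matrix.vecMul α (wordProd M w))).comap
            (Matrix.vecMulLinear (M a)) := by
        rw [Submodule.span_le]
        rintro _ ⟨w, rfl⟩
        refine Submodule.subset_span ⟨w ++ [a], ?_⟩
        simp [wordProd, Matrix.vecMul_vecMul]
      simpa [dotLin] using this hv
  · rintro ⟨V, hα, hη, hinv⟩ w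
    have key : ∀ w : List Γ, ∀ v ∈ V, Matrix.vecMul v (wordProd M w) ∈ V := by
      intro w
      induction w with
      | nil => intro v hv; simpa [wordProd, Matrix.vecMul_one] using hv
      | cons a t ih =>
        intro v hv
        have : Matrix.vecMul v (wordProd M (a :: t)) =
            Matrix.vecMul (Matrix.vecMul v (M a)) (wordProd M t) := by
          simp [wordProd, Matrix.vecMul_vecMul]
        rw [this]
        exact ih _ (hinv v hv a)
    rw [hWA]
    exact hη _ (key w α hα)
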